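/- arXiv:1808.06062 — 4 statements merged into one kernel-verified Lean document; each statement's English description precedes it below -/
import Mathlib

section
/- For positive integers $t_0, t_1$, the integral $\int_0^1 \beta(p; t_0, t_1) H_2(p)\, dp$ equals $\frac{\log_2 e}{t_0+t_1}\big((t_0+t_1) H_{t_0+t_1} - t_0 H_{t_0} - t_1 H_{t_1}\big)$, where $\beta(p;t_0,t_1) = \frac{(t_0+t_1-1)!}{(t_0-1)!(t_1-1)!} p^{t_0-1}(1-p)^{t_1-1}$ is the Beta$(t_0,t_1)$ density, $H_2$ is the binary entropy function, and $H_m = \sum_{i=1}^m 1/i$ is the $m$th harmonic number. -/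
open Real Finset

/-- Binary entropy function (base 2). -/
noncomputable def binEnt (x : ℝ) : ℝ := -x * Real.logb 2 x - (1 - x) * Real.logb 2 (1 - x)

/-- The `m`th harmonic number. -/
noncomputable def harmonic' (m : ℕ) : ℝ := ∑ i ∈ Finset.range m, (1 : ℝ) / (i + 1)

/-- The Beta(t0, t1) probability density function. -/
noncomputable def betaPdf (t0 t1 : ℕ) (p : ℝ) : ℝ :=
  ((t0 + t1 - 1).factorial : ℝ) / ((t0 - 1).factorial * (t1 - 1).factorial) *
    p ^ (t0 - 1) * (1 - p) ^ (t1 - 1)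

open MeasureTheory

lemma harmonic'_succ (n : ℕ) : harmonic' (n+1) = harmonic' n + 1/((n:ℝ)+1) := by
  simp [harmonic', Finset.sum_range_succ]

/-- ∫₀¹ x^(m+1) log x dx = -1/(m+2)², stated in the everywhere-continuous form. -/
lemma int_pow_log (m : ℕ) :
    ∫ x in (0:ℝ)..1, x ^ m * (x * Real.log x) = -(1 / ((m:ℝ)+2)^2) := by
  have h2 : ((m:ℝ)+2) ≠ 0 := by positivity
  set F : ℝ → ℝ := fun x => x ^ (m+1) * (x * Real.log x) / ((m:ℝ)+2)
      - x ^ (m+2) / ((m:ℝ)+2)^2 with hFdef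
  have hcont : ContinuousOn F (Set.Icc 0 1) := by
    apply Continuous.continuousOn
    fun_prop
  have hderiv : ∀ x ∈ Set.Ioo (0:ℝ) 1,
      HasDerivWithinAt F (x ^ m * (x * Real.log x)) (Set.Ioi x) x := by
    intro x hx
    have hx0 : x ≠ 0 := ne_of_gt hx.1
    have hF2 : F = fun x : ℝ => x ^ (m+2) * Real.log x / ((m:ℝ)+2)
        - x ^ (m+2) / ((m:ℝ)+2)^2 := by
      funext y; simp only [hFdef]; ring
    rw [hF2]
    have h1 : HasDerivAt (fun x : ℝ => x ^ (m+2) * Real.log x)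
        (((m:ℝ)+2) * x ^ (m+1) * Real.log x + x ^ (m+2) * x⁻¹) x := by
      have := (hasDerivAt_pow (m+2) x).mul (Real.hasDerivAt_log hx0)
      refine this.congr_deriv ?_
      rw [show m + 2 - 1 = m + 1 by omega]; push_cast; ring
    have h3 : HasDerivAt (fun x : ℝ => x ^ (m+2) * Real.log x / ((m:ℝ)+2)
        - x ^ (m+2) / ((m:ℝ)+2)^2)
        ((((m:ℝ)+2) * x ^ (m+1) * Real.log x + x ^ (m+2) * x⁻¹) / ((m:ℝ)+2)
          - (((m:ℝ)+2) * x ^ (m+1)) / ((m:ℝ)+2)^2) x := by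
      apply HasDerivAt.sub (h1.div_const _)
      apply HasDerivAt.div_const
      refine (hasDerivAt_pow (m+2) x).congr_deriv ?_
      rw [show m + 2 - 1 = m + 1 by omega]; push_cast; ring
    have heq : (((m:ℝ)+2) * x ^ (m+1) * Real.log x + x ^ (m+2) * x⁻¹) / ((m:ℝ)+2)
          - (((m:ℝ)+2) * x ^ (m+1)) / ((m:ℝ)+2)^2 = x ^ m * (x * Real.log x) := by
      field_simp
      ring
    exact (heq ▸ h3).hasDerivWithinAt
  have hint : IntervalIntegrable (fun x : ℝ => x ^ m * (x * Real.log x)) volume 0 1 := by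
    apply Continuous.intervalIntegrable; fun_prop
  rw [intervalIntegral.integral_eq_sub_of_hasDeriv_right_of_le zero_le_one hcont hderiv hint]
  simp [hFdef]

lemma sum_eq_T (b : ℕ) : ∀ a : ℕ,
    ∑ k ∈ Finset.range (b+1), (-1:ℝ)^k * (b.choose k) / ((a:ℝ)+k+1)^2
      = ((a.factorial : ℝ) * b.factorial / ((a+b+1).factorial : ℝ))
          * (harmonic' (a+b+1) - harmonic' a) := by
  induction b with
  | zero =>
    intro a
    have ha : ((a:ℝ)+1) ≠ 0 := by positivity
    rw [harmonic'_succ]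
    simp [Nat.factorial_succ]
    field_simp
  | succ b ih =>
    intro a
    have pascal : (∑ k ∈ range (b+2), (-1:ℝ)^k * ((b+1).choose k) / ((a:ℝ)+k+1)^2)
        = (∑ k ∈ range (b+1), (-1:ℝ)^k * (b.choose k) / ((a:ℝ)+k+1)^2)
          - ∑ k ∈ range (b+1), (-1:ℝ)^k * (b.choose k) / ((a:ℝ)+1+k+1)^2 := by
      rw [Finset.sum_range_succ' (fun k => (-1:ℝ)^k * ((b+1).choose k) / ((a:ℝ)+k+1)^2) (b+1)]
      have hsplit : ∀ k : ℕ, (-1:ℝ)^(k+1) * (((b+1).choose (k+1) : ℕ) : ℝ) / ((a:ℝ)+((k+1:ℕ):ℝ)+1)^2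
          = (-1:ℝ)^(k+1) * ((b.choose (k+1) : ℕ) : ℝ) / ((a:ℝ)+((k+1:ℕ):ℝ)+1)^2
            - (-1:ℝ)^k * (b.choose k) / ((a:ℝ)+1+k+1)^2 := by
        intro k
        rw [Nat.choose_succ_succ]
        push_cast
        ring
      rw [Finset.sum_congr rfl (fun k _ => hsplit k), Finset.sum_sub_distrib]
      have hre : (∑ k ∈ range (b+1), (-1:ℝ)^(k+1) * ((b.choose (k+1) : ℕ) : ℝ) / ((a:ℝ)+((k+1:ℕ):ℝ)+1)^2)
          + (-1:ℝ)^0 * (((b+1).choose 0 : ℕ) : ℝ) / ((a:ℝ)+((0:ℕ):ℝ)+1)^2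
          = ∑ k ∈ range (b+1), (-1:ℝ)^k * (b.choose k) / ((a:ℝ)+k+1)^2 := by
        have h0 : (-1:ℝ)^0 * (((b+1).choose 0 : ℕ) : ℝ) / ((a:ℝ)+((0:ℕ):ℝ)+1)^2
            = (-1:ℝ)^0 * ((b.choose 0 : ℕ) : ℝ) / ((a:ℝ)+((0:ℕ):ℝ)+1)^2 := by simp
        rw [h0, ← Finset.sum_range_succ' (fun k => (-1:ℝ)^k * (b.choose k) / ((a:ℝ)+k+1)^2) (b+1)]
        rw [Finset.sum_range_succ]
        simp [Nat.choose_succ_self]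
      linarith [hre]
    have esum : (∑ k ∈ range (b+1), (-1:ℝ)^k * (b.choose k) / ((a:ℝ)+1+k+1)^2)
        = (((a+1).factorial : ℝ) * b.factorial / (((a+1)+b+1).factorial : ℝ))
            * (harmonic' ((a+1)+b+1) - harmonic' (a+1)) := by
      rw [← ih (a+1)]
      apply Finset.sum_congr rfl
      intro k _
      push_cast
      ring
    rw [pascal, ih a, esum]
    have e1 : (a+1)+b+1 = (a+b+1)+1 := by omega
    have e2 : a+(b+1)+1 = (a+b+1)+1 := by omega
    rw [e1, e2, harmonic'_succ (a+b+1), harmonic'_succ a]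
    rw [Nat.factorial_succ (a+b+1), Nat.factorial_succ a, Nat.factorial_succ b]
    have hfab : ((a+b+1).factorial : ℝ) ≠ 0 := Nat.cast_ne_zero.mpr (Nat.factorial_ne_zero _)
    have hfa : ((a).factorial : ℝ) ≠ 0 := Nat.cast_ne_zero.mpr (Nat.factorial_ne_zero _)
    have hfb : ((b).factorial : ℝ) ≠ 0 := Nat.cast_ne_zero.mpr (Nat.factorial_ne_zero _)
    have h1 : ((a:ℝ)+1) ≠ 0 := by positivity
    have h2 : ((a:ℝ)+(b:ℝ)+1+1) ≠ 0 := by positivity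
    push_cast
    field_simp
    ring

lemma integral_J (a b : ℕ) :
    (∫ x in (0:ℝ)..1, -(x ^ a * (1-x) ^ b * (x * Real.log x)))
      = (((a+1).factorial : ℝ) * b.factorial / ((a+b+2).factorial : ℝ))
          * (harmonic' (a+b+2) - harmonic' (a+1)) := by
  have hexp : ∀ x : ℝ, -(x ^ a * (1-x) ^ b * (x * Real.log x))
      = ∑ k ∈ Finset.range (b+1),
          (-1:ℝ)^k * (b.choose k) * (-(x ^ (a+k) * (x * Real.log x))) := by
    intro x
    have hb : ((1:ℝ) - x) ^ b = ∑ k ∈ Finset.range (b+1), (-x)^k * (1:ℝ)^(b-k) * (b.choose k) := by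
      rw [← add_pow]
      ring_nf
    rw [hb, Finset.mul_sum, Finset.sum_mul, ← Finset.sum_neg_distrib]
    apply Finset.sum_congr rfl
    intro k _
    rw [neg_pow, pow_add]
    ring
  calc (∫ x in (0:ℝ)..1, -(x ^ a * (1-x) ^ b * (x * Real.log x)))
      = ∫ x in (0:ℝ)..1, ∑ k ∈ Finset.range (b+1),
          (-1:ℝ)^k * (b.choose k) * (-(x ^ (a+k) * (x * Real.log x))) := by
        exact intervalIntegral.integral_congr (fun x _ => hexp x)
    _ = ∑ k ∈ Finset.range (b+1),
          ∫ x in (0:ℝ)..1, (-1:ℝ)^k * (b.choose k) * (-(x ^ (a+k) * (x * Real.log x))) := by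
        apply intervalIntegral.integral_finset_sum
        intro k _
        apply Continuous.intervalIntegrable
        fun_prop
    _ = ∑ k ∈ Finset.range (b+1), (-1:ℝ)^k * (b.choose k) / (((a:ℝ)+1)+k+1)^2 := by
        apply Finset.sum_congr rfl
        intro k _
        rw [intervalIntegral.integral_const_mul, intervalIntegral.integral_neg, int_pow_log]
        push_cast
        ring
    _ = (((a+1).factorial : ℝ) * b.factorial / ((a+b+2).factorial : ℝ))
          * (harmonic' (a+b+2) - harmonic' (a+1)) := by
        have := sum_eq_T b (a+1)
        have e : (a+1)+b+1 = a+b+2 := by omega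
        rw [e] at this
        rw [← this]
        apply Finset.sum_congr rfl
        intro k _
        push_cast
        ring

theorem capacity_noiseless_end_duplication (t0 t1 : ℕ) (ht0 : 1 ≤ t0) (ht1 : 1 ≤ t1) :
    ∫ p in (0:ℝ)..1, betaPdf t0 t1 p * binEnt p =
      Real.logb 2 (Real.exp 1) / (t0 + t1) *
        ((t0 + t1) * harmonic' (t0 + t1) - t0 * harmonic' t0 - t1 * harmonic' t1) := by
  obtain ⟨a, rfl⟩ : ∃ a, t0 = a+1 := ⟨t0-1, by omega⟩
  obtain ⟨c, rfl⟩ : ∃ c, t1 = c+1 := ⟨t1-1, by omega⟩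
  have hlog2 : Real.log 2 ≠ 0 := ne_of_gt (Real.log_pos one_lt_two)
  set C : ℝ := ((a+c+1).factorial : ℝ) / ((a.factorial : ℝ) * (c.factorial : ℝ)) with hC
  have hpt : ∀ p : ℝ, betaPdf (a+1) (c+1) p * binEnt p
      = (C * (Real.log 2)⁻¹) *
        (-(p ^ a * (1-p) ^ c * (p * Real.log p))
          + -((1-p) ^ c * p ^ a * ((1-p) * Real.log (1-p)))) := by
    intro p
    have e : (a+1)+(c+1)-1 = a+c+1 := by omega
    simp only [betaPdf, binEnt, Real.logb, e, Nat.add_sub_cancel, hC]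
    ring
  have hi1 : IntervalIntegrable (fun p : ℝ => -(p ^ a * (1-p) ^ c * (p * Real.log p)))
      volume 0 1 := by apply Continuous.intervalIntegrable; fun_prop
  have hi2 : IntervalIntegrable (fun p : ℝ => -((1-p) ^ c * p ^ a * ((1-p) * Real.log (1-p))))
      volume 0 1 := by apply Continuous.intervalIntegrable; fun_prop
  rw [intervalIntegral.integral_congr (fun p _ => hpt p)]
  rw [intervalIntegral.integral_const_mul, intervalIntegral.integral_add hi1 hi2]
  have hsub : (∫ p in (0:ℝ)..1, -((1-p) ^ c * p ^ a * ((1-p) * Real.log (1-p))))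
      = ∫ u in (0:ℝ)..1, -(u ^ c * (1-u) ^ a * (u * Real.log u)) := by
    have h := intervalIntegral.integral_comp_sub_left (a := (0:ℝ)) (b := 1)
      (fun u => -(u ^ c * (1-u) ^ a * (u * Real.log u))) 1
    norm_num at h
    simp only [intervalIntegral.integral_neg]
    rw [h]
  rw [hsub, integral_J a c, integral_J c a]
  have e1 : c + a + 2 = a + c + 2 := by omega
  have e2 : (a+1) + (c+1) = a + c + 2 := by omega
  rw [e1, e2]
  have hlogb : Real.logb 2 (Real.exp 1) = (Real.log 2)⁻¹ := by
    simp [Real.logb, Real.log_exp]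
  rw [hlogb]
  rw [show (a+c+2).factorial = (a+c+2) * (a+c+1).factorial from Nat.factorial_succ _,
      show (a+1).factorial = (a+1) * a.factorial from Nat.factorial_succ _,
      show (c+1).factorial = (c+1) * c.factorial from Nat.factorial_succ _]
  have hfa : ((a).factorial : ℝ) ≠ 0 := Nat.cast_ne_zero.mpr (Nat.factorial_ne_zero _)
  have hfc : ((c).factorial : ℝ) ≠ 0 := Nat.cast_ne_zero.mpr (Nat.factorial_ne_zero _)
  have hfac : ((a+c+1).factorial : ℝ) ≠ 0 := Nat.cast_ne_zero.mpr (Nat.factorial_ne_zero _)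
  have hn : ((a:ℝ)+(c:ℝ)+2) ≠ 0 := by positivity
  rw [hC]
  push_cast
  field_simp
  ring
end

section
/- Define the signature of a permutation $\pi$ of $[n+1]$ as the binary string $u \in \{0,1\}^n$ with $u_i = 1$ if $\pi_i < \pi_{i+1}$ and $u_i = 0$ otherwise. For a binary string $u$ of length $n$, let $T_u$ be the set of positions $i \in [n+1]$ such that ($i = 1$ or $u_{i-1} = 1$) and ($i = n+1$ or $u_i = 0$). Then the number of permutations of $[n+1]$ with signature $u$ satisfies the recursion $|\Sigma_u| = \sum_{i \in T_u} \binom{n}{i-1} |\Sigma_{u_1^{i-2}}| \cdot |\Sigma_{u_{i+1}^n}|$, where $u_1^{i-2}$ and $u_{i+1}^n$ denote the indicated (possibly empty) substrings. -/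
set_option maxHeartbeats 1000000

/-- The number of permutations of `[n+1]` (with `n = u.length`) whose signature is the
binary string `u`: position `i` of the signature is `1` (here `true`) iff the permutation
ascends from position `i` to position `i+1`. -/
noncomputable def sigCount (u : List Bool) : ℕ :=
  Nat.card {π : Equiv.Perm (Fin (u.length + 1)) //
    ∀ i : Fin u.length, (u.get i = true ↔ π i.castSucc < π i.succ)}

namespace SigRec

/-- pattern predicate: first `m-1` entries of `v` describe ascents/descents of `f`. -/
def IsPat {α : Type*} [LT α] (v : List Bool) {m : ℕ} (f : Fin m → α) : Prop :=
  ∀ i : ℕ, ∀ h : i + 1 < m,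
    (v.getD i false = true ↔ f ⟨i, Nat.lt_of_succ_lt h⟩ < f ⟨i + 1, h⟩)

noncomputable def patCount (α : Type*) [LT α] (v : List Bool) (m : ℕ) : ℕ :=
  Nat.card {f : Fin m → α // Function.Bijective f ∧ IsPat v f}

lemma nat_card_sigma {ι : Type*} [Fintype ι] (F : ι → Type*) [∀ i, Finite (F i)] :
    Nat.card (Σ i, F i) = ∑ i, Nat.card (F i) := by
  letI := fun i => Fintype.ofFinite (F i)
  simp [Nat.card_eq_fintype_card]

/-- perms with property ≃ bijective functions with property -/
noncomputable def permEquiv {α : Type*} (Q : (α → α) → Prop) :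
    {π : Equiv.Perm α // Q ⇑π} ≃ {f : α → α // Function.Bijective f ∧ Q f} where
  toFun π := ⟨π.1, π.1.bijective, π.2⟩
  invFun f := ⟨Equiv.ofBijective f.1 f.2.1, f.2.2⟩
  left_inv π := Subtype.ext (Equiv.ext fun x => rfl)
  right_inv f := rfl

lemma patCount_congr {α β : Type*} [LinearOrder α] [LinearOrder β] (e : α ≃o β)
    (v : List Bool) (m : ℕ) : patCount α v m = patCount β v m := by
  refine Nat.card_congr ⟨fun f => ⟨e ∘ f.1, (e.toEquiv.bijective).comp f.2.1, fun i h => ?_⟩,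
    fun f => ⟨e.symm ∘ f.1, (e.symm.toEquiv.bijective).comp f.2.1, fun i h => ?_⟩, fun f => ?_, fun f => ?_⟩
  · exact (f.2.2 i h).trans (by simp)
  · exact (f.2.2 i h).trans (by simp)
  · exact Subtype.ext (funext fun x => by simp)
  · exact Subtype.ext (funext fun x => by simp)

lemma sigCount_eq (u : List Bool) :
    sigCount u = patCount (Fin (u.length + 1)) u (u.length + 1) := by
  rw [sigCount, patCount]
  refine Nat.card_congr ((Equiv.subtypeEquivRight ?_).trans (permEquiv _))
  intro π
  constructor
  · intro hp i h
    have hi : i < u.length := by omega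
    have := hp ⟨i, hi⟩
    simpa [List.getD, List.getElem?_eq_getElem, hi, Fin.castSucc, Fin.succ] using this
  · intro hp i
    have := hp i.1 (by omega)
    simpa [List.getD, List.getElem?_eq_getElem, i.2, Fin.castSucc, Fin.castAdd, Fin.castLE, Fin.succ] using this

lemma patCount_eq_sigCount {α : Type*} [LinearOrder α] [Fintype α] (v : List Bool)
    (h : Fintype.card α = v.length + 1) : patCount α v (v.length + 1) = sigCount v := by
  rw [sigCount_eq, patCount_congr (monoEquivOfFin α h).symm]

lemma patCount_zero {α : Type*} [LinearOrder α] [IsEmpty α] (v : List Bool) :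
    patCount α v 0 = 1 := by
  haveI : Unique {f : Fin 0 → α // Function.Bijective f ∧ IsPat v f} :=
    ⟨⟨⟨fun i => i.elim0, ⟨fun a b _ => a.elim0, fun b => (IsEmpty.false b).elim⟩,
        fun i h => by omega⟩⟩,
      fun f => Subtype.ext (funext fun i => i.elim0)⟩
  exact Nat.card_unique

lemma sigCount_nil : sigCount [] = 1 := by
  rw [sigCount]
  rw [Nat.card_congr (Equiv.subtypeUnivEquiv fun π => fun i => i.elim0)]
  simp [Nat.card_eq_fintype_card]

/-! ### The prefix value set -/

def preS (n j : ℕ) (hj : j ≤ n) (f : Fin (n + 1) → Fin (n + 1)) : Finset (Fin n) :=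
  Finset.univ.filter fun v => ∃ i : Fin j, f ⟨i.1, by omega⟩ = v.castSucc

lemma mem_preS {n j : ℕ} {hj : j ≤ n} {f : Fin (n + 1) → Fin (n + 1)} {v : Fin n} :
    v ∈ preS n j hj f ↔ ∃ i : Fin j, f ⟨i.1, by omega⟩ = v.castSucc := by
  simp [preS]

lemma card_preS {n j : ℕ} (hj : j ≤ n) {f : Fin (n + 1) → Fin (n + 1)}
    (hinj : Function.Injective f) (hlast : f ⟨j, by omega⟩ = Fin.last n) :
    (preS n j hj f).card = j := by
  have hne : ∀ i : Fin j, f ⟨i.1, by omega⟩ ≠ Fin.last n := by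
    intro i hcon
    have h2 := hinj (hcon.trans hlast.symm)
    have h3 : i.1 = j := congrArg Fin.val h2
    omega
  have himg : preS n j hj f
      = Finset.univ.image fun i : Fin j => (f ⟨i.1, by omega⟩).castPred (hne i) := by
    ext v
    simp only [mem_preS, Finset.mem_image, Finset.mem_univ, true_and]
    constructor
    · rintro ⟨i, hi⟩
      exact ⟨i, by rw [← Fin.castSucc_inj, Fin.castSucc_castPred, hi]⟩
    · rintro ⟨i, hi⟩
      exact ⟨i, by rw [← hi, Fin.castSucc_castPred]⟩
  have hinj2 : Function.Injective fun i : Fin j => (f ⟨i.1, by omega⟩).castPred (hne i) := by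
    intro a b hab
    simp only at hab
    have h0 : f ⟨a.1, by omega⟩ = f ⟨b.1, by omega⟩ := by
      have h0' := congrArg Fin.castSucc hab
      rwa [Fin.castSucc_castPred, Fin.castSucc_castPred] at h0'
    have h1 := congrArg Fin.val (hinj h0)
    exact Fin.ext h1
  rw [himg, Finset.card_image_of_injective _ hinj2, Finset.card_univ, Fintype.card_fin]

/-! ### Backward construction -/

def backF {n : ℕ} (j : ℕ) {S : Finset (Fin n)} (fp : Fin j → ↥S) (gp : Fin (n - j) → ↥(Sᶜ)) :
    Fin (n + 1) → Fin (n + 1) := fun q =>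
  if hq : q.1 < j then ((fp ⟨q.1, hq⟩ : ↥S) : Fin n).castSucc
  else if hq' : q.1 = j then Fin.last n
  else ((gp ⟨q.1 - (j + 1), by omega⟩ : ↥(Sᶜ)) : Fin n).castSucc

lemma backF_lt {n j : ℕ} {S : Finset (Fin n)} {fp : Fin j → ↥S} {gp : Fin (n - j) → ↥(Sᶜ)}
    {q : Fin (n + 1)} (hq : q.1 < j) :
    backF j fp gp q = ((fp ⟨q.1, hq⟩ : ↥S) : Fin n).castSucc := dif_pos hq

lemma backF_eq {n j : ℕ} {S : Finset (Fin n)} {fp : Fin j → ↥S} {gp : Fin (n - j) → ↥(Sᶜ)}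
    {q : Fin (n + 1)} (hq : q.1 = j) : backF j fp gp q = Fin.last n := by
  unfold backF
  rw [dif_neg (by omega), dif_pos hq]

lemma backF_gt {n j : ℕ} {S : Finset (Fin n)} {fp : Fin j → ↥S} {gp : Fin (n - j) → ↥(Sᶜ)}
    {q : Fin (n + 1)} (hq : j < q.1) :
    backF j fp gp q = ((gp ⟨q.1 - (j + 1), by omega⟩ : ↥(Sᶜ)) : Fin n).castSucc := by
  unfold backF
  rw [dif_neg (by omega), dif_neg (by omega)]

lemma backF_inj {n j : ℕ} {S : Finset (Fin n)} {fp : Fin j → ↥S} {gp : Fin (n - j) → ↥(Sᶜ)}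
    (hfp : Function.Injective fp) (hgp : Function.Injective gp) :
    Function.Injective (backF j fp gp) := by
  intro a b hab
  rcases Nat.lt_trichotomy a.1 j with ha | ha | ha <;>
    rcases Nat.lt_trichotomy b.1 j with hb | hb | hb
  · rw [backF_lt ha, backF_lt hb] at hab
    have h0 := hfp (Subtype.ext (Fin.castSucc_inj.mp hab))
    have h1 := congrArg Fin.val h0
    exact Fin.ext h1
  · rw [backF_lt ha, backF_eq hb] at hab
    exact absurd hab (Fin.castSucc_lt_last _).ne
  · rw [backF_lt ha, backF_gt hb] at hab
    have h0 := Fin.castSucc_inj.mp hab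
    have hmem := (fp ⟨a.1, ha⟩).2
    rw [h0] at hmem
    exact absurd hmem (Finset.mem_compl.mp (gp _).2)
  · rw [backF_eq ha, backF_lt hb] at hab
    exact absurd hab.symm (Fin.castSucc_lt_last _).ne
  · exact Fin.ext (ha.trans hb.symm)
  · rw [backF_eq ha, backF_gt hb] at hab
    exact absurd hab.symm (Fin.castSucc_lt_last _).ne
  · rw [backF_gt ha, backF_lt hb] at hab
    have h0 := Fin.castSucc_inj.mp hab
    have hmem := (fp ⟨b.1, hb⟩).2
    rw [← h0] at hmem
    exact absurd hmem (Finset.mem_compl.mp (gp _).2)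
  · rw [backF_gt ha, backF_eq hb] at hab
    exact absurd hab (Fin.castSucc_lt_last _).ne
  · rw [backF_gt ha, backF_gt hb] at hab
    have h0 := hgp (Subtype.ext (Fin.castSucc_inj.mp hab))
    have h1 : a.1 - (j + 1) = b.1 - (j + 1) := congrArg Fin.val h0
    exact Fin.ext (by omega)

lemma getD_take {u : List Bool} {m i : ℕ} (h : i < m) :
    (u.take m).getD i false = u.getD i false := by
  simp only [List.getD]
  rw [List.getElem?_take_of_lt h]

lemma getD_drop {u : List Bool} {m k : ℕ} :
    (u.drop m).getD k false = u.getD (m + k) false := by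
  simp only [List.getD]
  rw [List.getElem?_drop]

lemma backF_pat {u : List Bool} {j : ℕ} (hj : j ≤ u.length)
    (h1 : j = 0 ∨ u[j - 1]? = some true) (h2 : j = u.length ∨ u[j]? = some false)
    {S : Finset (Fin u.length)} {fp : Fin j → ↥S} {gp : Fin (u.length - j) → ↥(Sᶜ)}
    (hfp : IsPat (u.take (j - 1)) fp) (hgp : IsPat (u.drop (j + 1)) gp) :
    IsPat u (backF j fp gp) := by
  intro i h
  have hi : i < u.length := by omega
  rcases Nat.lt_trichotomy (i + 1) j with hc | hc | hc
  · rw [backF_lt (show i < j by omega), backF_lt (show i + 1 < j from hc),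
      Fin.castSucc_lt_castSucc_iff, Subtype.coe_lt_coe]
    rw [← getD_take (show i < j - 1 by omega)]
    exact hfp i (by omega)
  · rw [backF_lt (show i < j by omega), backF_eq (show i + 1 = j from hc)]
    have hright : ((fp ⟨i, by omega⟩ : ↥S) : Fin u.length).castSucc < Fin.last u.length :=
      Fin.castSucc_lt_last _
    have hleft : u.getD i false = true := by
      rcases h1 with h1 | h1
      · omega
      have h3 : u[i]? = some true := by rw [show i = j - 1 by omega]; exact h1
      simp [List.getD, h3]
    exact iff_of_true hleft hright
  · rcases Nat.lt_or_ge j i with hc' | hc'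
    · rw [backF_gt (show j < i from hc'), backF_gt (show j < i + 1 by omega),
        Fin.castSucc_lt_castSucc_iff, Subtype.coe_lt_coe]
      have hg : (u.drop (j + 1)).getD (i - (j + 1)) false = u.getD i false := by
        rw [getD_drop]
        congr 1
        omega
      rw [← hg]
      have hidx : (⟨i + 1 - (j + 1), by omega⟩ : Fin (u.length - j))
          = ⟨i - (j + 1) + 1, by omega⟩ := Fin.ext (show i + 1 - (j + 1) = i - (j + 1) + 1 by omega)
      rw [hidx]
      exact hgp (i - (j + 1)) (by omega)
    · have hc'' : i = j := by omega
      rw [backF_eq hc'', backF_gt (show j < i + 1 by omega)]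
      have hleft : u.getD i false = false := by
        rcases h2 with h2 | h2
        · omega
        have h3 : u[i]? = some false := by rw [show i = j from hc'']; exact h2
        simp [List.getD, h3]
      exact iff_of_false (fun hcon => Bool.false_ne_true (hleft.symm.trans hcon))
        (not_lt.2 (Fin.le_last _))

lemma backF_preS {n j : ℕ} (hj : j ≤ n) {S : Finset (Fin n)} {fp : Fin j → ↥S}
    {gp : Fin (n - j) → ↥(Sᶜ)} (hfp : Function.Surjective fp) :
    preS n j hj (backF j fp gp) = S := by
  ext v
  rw [mem_preS]
  constructor
  · rintro ⟨i, hi⟩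
    rw [backF_lt (show ((⟨i.1, by omega⟩ : Fin (n + 1))).1 < j from i.2)] at hi
    have h0 := Fin.castSucc_inj.mp hi
    rw [← h0]
    exact (fp _).2
  · intro hv
    obtain ⟨i, hi⟩ := hfp ⟨v, hv⟩
    refine ⟨i, ?_⟩
    rw [backF_lt (show ((⟨i.1, by omega⟩ : Fin (n + 1))).1 < j from i.2)]
    have h0 : fp ⟨i.1, i.2⟩ = ⟨v, hv⟩ := hi
    rw [h0]

/-! ### Forward construction -/

def fwdP {n j : ℕ} (hj : j ≤ n) (f : Fin (n + 1) → Fin (n + 1))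
    (hinj : Function.Injective f) (hlast : f ⟨j, by omega⟩ = Fin.last n) (i : Fin j) : Fin n :=
  (f ⟨i.1, by omega⟩).castPred (by
    intro hcon
    have h2 := hinj (hcon.trans hlast.symm)
    have h3 : i.1 = j := congrArg Fin.val h2
    omega)

lemma fwdP_mem {n j : ℕ} (hj : j ≤ n) (f : Fin (n + 1) → Fin (n + 1))
    (hinj : Function.Injective f) (hlast : f ⟨j, by omega⟩ = Fin.last n) (i : Fin j) :
    fwdP hj f hinj hlast i ∈ preS n j hj f :=
  mem_preS.2 ⟨i, (Fin.castSucc_castPred _ _).symm⟩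

def fwdS {n j : ℕ} (hj : j ≤ n) (f : Fin (n + 1) → Fin (n + 1))
    (hinj : Function.Injective f) (hlast : f ⟨j, by omega⟩ = Fin.last n)
    (k : Fin (n - j)) : Fin n :=
  (f ⟨j + 1 + k.1, by omega⟩).castPred (by
    intro hcon
    have h2 := hinj (hcon.trans hlast.symm)
    have h3 : j + 1 + k.1 = j := congrArg Fin.val h2
    omega)

lemma fwdS_not_mem {n j : ℕ} (hj : j ≤ n) (f : Fin (n + 1) → Fin (n + 1))
    (hinj : Function.Injective f) (hlast : f ⟨j, by omega⟩ = Fin.last n) (k : Fin (n - j)) :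
    fwdS hj f hinj hlast k ∉ preS n j hj f := by
  rw [mem_preS]
  rintro ⟨i, hi⟩
  rw [fwdS, Fin.castSucc_castPred] at hi
  have h0 := hinj hi
  have h3 : i.1 = j + 1 + k.1 := congrArg Fin.val h0
  omega

lemma fwdP_pat {u : List Bool} {j : ℕ} (hj : j ≤ u.length)
    {f : Fin (u.length + 1) → Fin (u.length + 1)} (hinj : Function.Injective f)
    (hlast : f ⟨j, by omega⟩ = Fin.last u.length) (hpat : IsPat u f) :
    IsPat (u.take (j - 1)) (fwdP hj f hinj hlast) := by
  intro i h
  rw [getD_take (show i < j - 1 by omega), hpat i (by omega)]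
  simp only [fwdP]
  rw [Fin.castPred_lt_castPred_iff]

lemma fwdS_pat {u : List Bool} {j : ℕ} (hj : j ≤ u.length)
    {f : Fin (u.length + 1) → Fin (u.length + 1)} (hinj : Function.Injective f)
    (hlast : f ⟨j, by omega⟩ = Fin.last u.length) (hpat : IsPat u f) :
    IsPat (u.drop (j + 1)) (fwdS hj f hinj hlast) := by
  intro k h
  rw [getD_drop, hpat (j + 1 + k) (by omega)]
  simp only [fwdS]
  rw [Fin.castPred_lt_castPred_iff]
  exact Iff.rfl


/-! ### The fiber equivalence -/

set_option maxHeartbeats 4000000 in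
noncomputable def fiberEquiv (u : List Bool) (j : ℕ) (hj : j ≤ u.length)
    (h1 : j = 0 ∨ u[j - 1]? = some true) (h2 : j = u.length ∨ u[j]? = some false)
    (S : Finset (Fin u.length)) (hS : S.card = j) :
    {f : Fin (u.length + 1) → Fin (u.length + 1) //
        (Function.Bijective f ∧ IsPat u f ∧ f ⟨j, by omega⟩ = Fin.last u.length) ∧
        preS u.length j hj f = S} ≃
      {fp : Fin j → ↥S // Function.Bijective fp ∧ IsPat (u.take (j - 1)) fp} ×
      {gp : Fin (u.length - j) → ↥(Sᶜ) //
        Function.Bijective gp ∧ IsPat (u.drop (j + 1)) gp} where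
  toFun x :=
    ⟨⟨fun i => ⟨fwdP hj x.1 x.2.1.1.injective x.2.1.2.2 i,
        by have hm := fwdP_mem hj x.1 x.2.1.1.injective x.2.1.2.2 i
           exact (Finset.ext_iff.mp x.2.2 _).mp hm⟩, by
      rw [Fintype.bijective_iff_injective_and_card]
      constructor
      · intro a b hab
        have h0 := congrArg Subtype.val hab
        simp only [fwdP] at h0
        have h0' := congrArg Fin.castSucc h0
        rw [Fin.castSucc_castPred, Fin.castSucc_castPred] at h0'
        have h1' := congrArg Fin.val (x.2.1.1.injective h0')
        exact Fin.ext h1'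
      · simp [Fintype.card_coe, hS], by
      intro i h
      rw [Subtype.mk_lt_mk]
      exact fwdP_pat hj x.2.1.1.injective x.2.1.2.2 x.2.1.2.1 i h⟩,
    ⟨fun k => ⟨fwdS hj x.1 x.2.1.1.injective x.2.1.2.2 k,
        Finset.mem_compl.mpr
          (by have hm := fwdS_not_mem hj x.1 x.2.1.1.injective x.2.1.2.2 k
              exact fun hcon => hm ((Finset.ext_iff.mp x.2.2 _).mpr hcon))⟩, by
      rw [Fintype.bijective_iff_injective_and_card]
      constructor
      · intro a b hab
        have h0 := congrArg Subtype.val hab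
        simp only [fwdS] at h0
        have h0' := congrArg Fin.castSucc h0
        rw [Fin.castSucc_castPred, Fin.castSucc_castPred] at h0'
        have h1' := congrArg Fin.val (x.2.1.1.injective h0')
        have h2' : j + 1 + a.1 = j + 1 + b.1 := h1'
        exact Fin.ext (by omega)
      · simp [Fintype.card_coe, Finset.card_compl, hS], by
      intro k h
      rw [Subtype.mk_lt_mk]
      exact fwdS_pat hj x.2.1.1.injective x.2.1.2.2 x.2.1.2.1 k h⟩⟩
  invFun y :=
    ⟨backF j y.1.1 y.2.1,
      ⟨Finite.injective_iff_bijective.mp (backF_inj y.1.2.1.injective y.2.2.1.injective),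
       backF_pat hj h1 h2 y.1.2.2 y.2.2.2,
       backF_eq rfl⟩,
      backF_preS hj y.1.2.1.surjective⟩
  left_inv x := by
    apply Subtype.ext
    funext q
    show backF j _ _ q = x.1 q
    rcases Nat.lt_trichotomy q.1 j with hq | hq | hq
    · rw [backF_lt hq]
      show Fin.castSucc (fwdP hj x.1 x.2.1.1.injective x.2.1.2.2 ⟨q.1, hq⟩) = x.1 q
      simp only [fwdP]
      rw [Fin.castSucc_castPred]
    · rw [backF_eq hq]
      have hq' : q = ⟨j, by omega⟩ := Fin.ext hq
      rw [hq', x.2.1.2.2]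
    · rw [backF_gt hq]
      show Fin.castSucc (fwdS hj x.1 x.2.1.1.injective x.2.1.2.2 ⟨q.1 - (j + 1), _⟩) = x.1 q
      simp only [fwdS]
      rw [Fin.castSucc_castPred]
      exact congrArg x.1 (Fin.ext (show j + 1 + (q.1 - (j + 1)) = q.1 by omega))
  right_inv y := by
    refine Prod.ext ?_ ?_
    · apply Subtype.ext
      funext i
      apply Subtype.ext
      show fwdP hj (backF j y.1.1 y.2.1) (backF_inj y.1.2.1.injective y.2.2.1.injective)
          (backF_eq rfl) i = ((y.1.1 i : ↥S) : Fin u.length)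
      simp only [fwdP]
      rw [← Fin.castSucc_inj, Fin.castSucc_castPred,
        backF_lt (show ((⟨i.1, by omega⟩ : Fin (u.length + 1))).1 < j from i.2)]
    · apply Subtype.ext
      funext k
      apply Subtype.ext
      show fwdS hj (backF j y.1.1 y.2.1) (backF_inj y.1.2.1.injective y.2.2.1.injective)
          (backF_eq rfl) k = ((y.2.1 k : ↥(Sᶜ)) : Fin u.length)
      simp only [fwdS]
      rw [← Fin.castSucc_inj, Fin.castSucc_castPred,
        backF_gt (show j < ((⟨j + 1 + k.1, by have hk := k.2; omega⟩ : Fin (u.length + 1))).1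
          from show j < j + 1 + k.1 by omega)]
      have hidx : (⟨((⟨j + 1 + k.1, by have hk := k.2; omega⟩ : Fin (u.length + 1))).1 - (j + 1),
          by have hk := k.2; omega⟩
          : Fin (u.length - j)) = k := Fin.ext (show j + 1 + k.1 - (j + 1) = k.1 by omega)
      rw [hidx]

/-! ### Counting -/

lemma isPat_iff (u : List Bool) (f : Fin (u.length + 1) → Fin (u.length + 1)) :
    (∀ i : Fin u.length, (u.get i = true ↔ f i.castSucc < f i.succ)) ↔ IsPat u f := by
  constructor
  · intro hp i h
    have hi : i < u.length := by omega
    have := hp ⟨i, hi⟩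
    simpa [List.getD, List.getElem?_eq_getElem, hi,
      Fin.castSucc, Fin.succ] using this
  · intro hp i
    have := hp i.1 (by omega)
    simpa [List.getD, List.getElem?_eq_getElem, i.2,
      Fin.castSucc, Fin.castAdd, Fin.castLE, Fin.succ] using this

lemma patCount_eq_sigCount' {α : Type*} [LinearOrder α] [Fintype α] (v : List Bool) (m : ℕ)
    (hm : m = v.length + 1) (h : Fintype.card α = m) : patCount α v m = sigCount v := by
  subst hm
  exact patCount_eq_sigCount v h

lemma cardA {u : List Bool} {j : ℕ} (hj : j ≤ u.length) {S : Finset (Fin u.length)}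
    (hS : S.card = j) :
    Nat.card {fp : Fin j → ↥S // Function.Bijective fp ∧ IsPat (u.take (j - 1)) fp}
      = sigCount (u.take (j - 1)) := by
  show patCount ↥S (u.take (j - 1)) j = _
  rcases Nat.eq_zero_or_pos j with rfl | hpos
  · haveI : IsEmpty ↥S := Finset.isEmpty_coe_sort.mpr (Finset.card_eq_zero.mp hS)
    have ht : u.take (0 - 1) = [] := by simp
    rw [ht, patCount_zero, sigCount_nil]
  · have hlen : (u.take (j - 1)).length = j - 1 := by rw [List.length_take]; omega
    exact patCount_eq_sigCount' _ j (by omega) (by rw [Fintype.card_coe, hS])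

lemma cardB {u : List Bool} {j : ℕ} (hj : j ≤ u.length) {S : Finset (Fin u.length)}
    (hS : S.card = j) :
    Nat.card {gp : Fin (u.length - j) → ↥(Sᶜ) //
        Function.Bijective gp ∧ IsPat (u.drop (j + 1)) gp}
      = sigCount (u.drop (j + 1)) := by
  show patCount ↥(Sᶜ) (u.drop (j + 1)) (u.length - j) = _
  have hcc : Fintype.card ↥(Sᶜ) = u.length - j := by
    rw [Fintype.card_coe, Finset.card_compl, hS, Fintype.card_fin]
  rcases Nat.lt_or_ge j u.length with hlt | hge
  · have hlen : (u.drop (j + 1)).length = u.length - (j + 1) := List.length_drop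
    exact patCount_eq_sigCount' _ _ (by rw [hlen]; omega) hcc
  · have hj' : j = u.length := by omega
    subst hj'
    haveI : IsEmpty ↥(Sᶜ) := Finset.isEmpty_coe_sort.mpr
      (Finset.card_eq_zero.mp (by rw [Finset.card_compl, hS, Fintype.card_fin]; omega))
    have hd : u.drop (u.length + 1) = [] := List.drop_eq_nil_of_le (by omega)
    have h0 : u.length - u.length = 0 := by omega
    rw [hd, h0, patCount_zero, sigCount_nil]

set_option maxHeartbeats 4000000 in
lemma fiber_count (u : List Bool) (p : Fin (u.length + 1)) :
    Nat.card {f : Fin (u.length + 1) → Fin (u.length + 1) //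
        Function.Bijective f ∧ IsPat u f ∧ f p = Fin.last u.length} =
      if (p.1 = 0 ∨ u[p.1 - 1]? = some true) ∧ (p.1 = u.length ∨ u[p.1]? = some false)
      then (u.length).choose p.1 * sigCount (u.take (p.1 - 1)) * sigCount (u.drop (p.1 + 1))
      else 0 := by
  classical
  have hj : p.1 ≤ u.length := by omega
  split_ifs with hcond
  · obtain ⟨hc1, hc2⟩ := hcond
    have hkey : ∀ Sel : {S : Finset (Fin u.length) // S.card = p.1},
        Nat.card {x : {f : Fin (u.length + 1) → Fin (u.length + 1) //
            Function.Bijective f ∧ IsPat u f ∧ f p = Fin.last u.length} //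
            preS u.length p.1 hj x.1 = Sel.1} =
          sigCount (u.take (p.1 - 1)) * sigCount (u.drop (p.1 + 1)) := by
      intro Sel
      rw [Nat.card_congr ((Equiv.subtypeSubtypeEquivSubtypeInter _ _).trans
        (fiberEquiv u p.1 hj hc1 hc2 Sel.1 Sel.2))]
      rw [Nat.card_prod, cardA hj Sel.2, cardB hj Sel.2]
    rw [Nat.card_congr (Equiv.sigmaFiberEquiv
      (fun x : {f : Fin (u.length + 1) → Fin (u.length + 1) //
          Function.Bijective f ∧ IsPat u f ∧ f p = Fin.last u.length} =>
        (⟨preS u.length p.1 hj x.1, card_preS hj x.2.1.injective x.2.2.2⟩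
          : {S : Finset (Fin u.length) // S.card = p.1}))).symm]
    rw [nat_card_sigma]
    have hsummand : ∀ Sel : {S : Finset (Fin u.length) // S.card = p.1},
        Nat.card {x : {f : Fin (u.length + 1) → Fin (u.length + 1) //
            Function.Bijective f ∧ IsPat u f ∧ f p = Fin.last u.length} //
            (⟨preS u.length p.1 hj x.1, card_preS hj x.2.1.injective x.2.2.2⟩
              : {S : Finset (Fin u.length) // S.card = p.1}) = Sel} =
          sigCount (u.take (p.1 - 1)) * sigCount (u.drop (p.1 + 1)) := by
      intro Sel
      rw [← hkey Sel]
      exact Nat.card_congr (Equiv.subtypeEquivRight fun x => by rw [Subtype.ext_iff])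
    rw [Finset.sum_congr rfl fun Sel _ => hsummand Sel]
    rw [Finset.sum_const, Finset.card_univ, Fintype.card_finset_len, Fintype.card_fin,
      smul_eq_mul, mul_assoc]
  · rw [not_and_or] at hcond
    haveI : IsEmpty {f : Fin (u.length + 1) → Fin (u.length + 1) //
        Function.Bijective f ∧ IsPat u f ∧ f p = Fin.last u.length} := by
      constructor
      rintro ⟨f, hbij, hpat, hlast⟩
      rcases hcond with hc | hc
      · rw [not_or] at hc
        obtain ⟨hc0, hct⟩ := hc
        have hlt : p.1 - 1 < u.length := by omega
        have hsome : u[p.1 - 1]? = some (u[p.1 - 1]'hlt) := by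
          rw [List.getElem?_eq_getElem hlt]
        rcases Bool.eq_false_or_eq_true (u[p.1 - 1]'hlt) with hb | hb
        · exact hct (hsome.trans (by rw [hb]))
        · have hp0 := hpat (p.1 - 1) (by omega)
          have hgd : u.getD (p.1 - 1) false = false := by
            simp [List.getD, List.getElem?_eq_getElem hlt, hb]
          rw [hgd] at hp0
          have hpp : (⟨p.1 - 1 + 1, by omega⟩ : Fin (u.length + 1)) = p :=
            Fin.ext (show p.1 - 1 + 1 = p.1 by omega)
          have hne : f ⟨p.1 - 1, by omega⟩ ≠ Fin.last u.length := by
            intro hcon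
            have h5 := hbij.injective (hcon.trans hlast.symm)
            have h6 : p.1 - 1 = p.1 := congrArg Fin.val h5
            omega
          have h8 : f ⟨p.1 - 1 + 1, by omega⟩ = Fin.last u.length :=
            (congrArg f hpp).trans hlast
          have h9 : f ⟨p.1 - 1, by omega⟩ < Fin.last u.length :=
            Fin.lt_last_iff_ne_last.mpr hne
          have hlt2 : f ⟨p.1 - 1, by omega⟩ < f ⟨p.1 - 1 + 1, by omega⟩ :=
            h9.trans_eq h8.symm
          exact Bool.false_ne_true (hp0.mpr hlt2)
      · rw [not_or] at hc
        obtain ⟨hcn, hcf⟩ := hc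
        have hlt : p.1 < u.length := by omega
        have hsome : u[p.1]? = some (u[p.1]'hlt) := by
          rw [List.getElem?_eq_getElem hlt]
        rcases Bool.eq_false_or_eq_true (u[p.1]'hlt) with hb | hb
        · have hp0 := hpat p.1 (by omega)
          have hgd : u.getD p.1 false = true := by
            simp [List.getD, List.getElem?_eq_getElem hlt, hb]
          rw [hgd] at hp0
          have hpp : (⟨p.1, by omega⟩ : Fin (u.length + 1)) = p := Fin.ext rfl
          have hlt2 : f ⟨p.1, by omega⟩ < f ⟨p.1 + 1, by omega⟩ := hp0.mp rfl
          have h8 : f ⟨p.1, by omega⟩ = Fin.last u.length := (congrArg f hpp).trans hlast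
          have h10 : Fin.last u.length < f ⟨p.1 + 1, by omega⟩ := h8.symm.trans_lt hlt2
          exact absurd h10 (not_lt.2 (Fin.le_last _))
        · exact hcf (hsome.trans (by rw [hb]))
    exact Nat.card_of_isEmpty

end SigRec

open SigRec in
/-- Recursion for the number of permutations with a given signature, obtained by
conditioning on the (0-based) position `j` of the maximal element `n+1`; `j` ranges over
the set `T_u` of positions with (`j = 0` or `u_{j-1} = 1`) and (`j = n` or `u_j = 0`). -/
theorem sigCount_recursion_max (u : List Bool) :
    sigCount u = ∑ j ∈ Finset.range (u.length + 1),
      if (j = 0 ∨ u[j - 1]? = some true) ∧ (j = u.length ∨ u[j]? = some false) then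
        (u.length).choose j * sigCount (u.take (j - 1)) * sigCount (u.drop (j + 1))
      else 0 := by
  classical
  have hL : sigCount u = ∑ p : Fin (u.length + 1),
      Nat.card {f : Fin (u.length + 1) → Fin (u.length + 1) //
        Function.Bijective f ∧ IsPat u f ∧ f p = Fin.last u.length} := by
    rw [sigCount, Nat.card_congr (Equiv.sigmaFiberEquiv
      (fun x : {π : Equiv.Perm (Fin (u.length + 1)) // ∀ i : Fin u.length,
          (u.get i = true ↔ π i.castSucc < π i.succ)} =>
        x.1.symm (Fin.last u.length))).symm, nat_card_sigma]
    refine Finset.sum_congr rfl fun p _ => Nat.card_congr ?_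
    refine (Equiv.subtypeSubtypeEquivSubtypeInter
      (fun π : Equiv.Perm (Fin (u.length + 1)) => ∀ i : Fin u.length,
        (u.get i = true ↔ π i.castSucc < π i.succ))
      (fun π => π.symm (Fin.last u.length) = p)).trans ?_
    refine (Equiv.subtypeEquivRight ?_).trans
      (permEquiv (fun f => IsPat u f ∧ f p = Fin.last u.length))
    intro π
    constructor
    · rintro ⟨hP, hs⟩
      exact ⟨(isPat_iff u π).mp hP, by rw [← hs]; exact π.apply_symm_apply _⟩
    · rintro ⟨hP, hl⟩
      exact ⟨(isPat_iff u π).mpr hP, (Equiv.symm_apply_eq π).mpr hl.symm⟩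
  rw [hL, ← Fin.sum_univ_eq_sum_range]
  exact Finset.sum_congr rfl fun p _ => fiber_count u p
end

section
/- Let $T_u$ and $U_u$ be the set of positions of 'descent-top' and 'ascent-top' slots of a binary string $u \in \{0,1\}^n$, i.e., $T_u = \{i \in [n+1] : (i=1 \text{ or } u_{i-1}=1) \text{ and } (i=n+1 \text{ or } u_i=0)\}$ and $U_u = \{i \in [n+1] : (i=1 \text{ or } u_{i-1}=0) \text{ and } (i=n+1 \text{ or } u_i=1)\}$. Then the count $|\Sigma_u|$ of permutations of $[n+1]$ with signature $u$ satisfies both $|\Sigma_u| = \sum_{i\in T_u} \binom{n}{i-1}|\Sigma_{u_1^{i-2}}||\Sigma_{u_{i+1}^n}|$ and $|\Sigma_u| = \sum_{i\in U_u} \binom{n}{i-1}|\Sigma_{u_1^{i-2}}||\Sigma_{u_{i+1}^n}|$. -/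
/-- signature predicate with ℕ indexing -/
def sigP (v : List Bool) (m : ℕ) (π : Equiv.Perm (Fin m)) : Prop :=
  ∀ i : ℕ, ∀ hi : i + 1 < m, (v[i]? = some true ↔ π ⟨i, by omega⟩ < π ⟨i+1, hi⟩)

lemma card_sigP (v : List Bool) (m : ℕ) (h : m = v.length + 1) :
    Nat.card {π : Equiv.Perm (Fin m) // sigP v m π} = sigCount v := by
  subst h
  apply Nat.card_congr
  apply Equiv.subtypeEquivRight
  intro π
  constructor
  · intro hp i
    have hi : (i : ℕ) + 1 < v.length + 1 := by omega
    have := hp i hi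
    rw [List.getElem?_eq_getElem (by omega : (i:ℕ) < v.length)] at this
    simp only [Option.some.injEq] at this
    exact this
  · intro hp i hi
    have := hp ⟨i, by omega⟩
    rw [List.getElem?_eq_getElem (by omega : i < v.length)]
    simp only [Option.some.injEq]
    exact this

lemma sigCount_nil : sigCount [] = 1 := by
  rw [← card_sigP [] 1 rfl]
  have : ∀ π : Equiv.Perm (Fin 1), sigP [] 1 π := by
    intro π i hi; omega
  rw [Nat.card_congr (Equiv.subtypeUnivEquiv this)]
  simp [Nat.card_eq_fintype_card]

lemma card_sigP_zero (v : List Bool) :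
    Nat.card {π : Equiv.Perm (Fin 0) // sigP v 0 π} = 1 := by
  have : ∀ π : Equiv.Perm (Fin 0), sigP v 0 π := by intro π i hi; omega
  rw [Nat.card_congr (Equiv.subtypeUnivEquiv this)]
  simp [Nat.card_eq_fintype_card]

lemma sigCount_fiber_sum (v : List Bool) :
    sigCount v = ∑ j ∈ Finset.range (v.length + 1),
      Nat.card {π : Equiv.Perm (Fin (v.length + 1)) //
        sigP v (v.length + 1) π ∧ ((π.symm (Fin.last v.length) : Fin (v.length+1)) : ℕ) = j} := by
  classical
  rw [← card_sigP v _ rfl]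
  rw [← Fin.sum_univ_eq_sum_range (fun j => Nat.card {π : Equiv.Perm (Fin (v.length + 1)) //
        sigP v (v.length + 1) π ∧ ((π.symm (Fin.last v.length) : Fin (v.length+1)) : ℕ) = j}) (v.length+1)]
  have e1 : {π : Equiv.Perm (Fin (v.length+1)) // sigP v (v.length+1) π} ≃
      Σ j : Fin (v.length+1), {π : Equiv.Perm (Fin (v.length+1)) //
        sigP v (v.length+1) π ∧ ((π.symm (Fin.last v.length) : Fin (v.length+1)) : ℕ) = (j : ℕ)} := by
    refine (Equiv.sigmaFiberEquiv
      (fun π' : {π : Equiv.Perm (Fin (v.length+1)) // sigP v (v.length+1) π} =>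
        π'.1.symm (Fin.last v.length))).symm.trans ?_
    refine Equiv.sigmaCongrRight (fun j => ?_)
    refine (Equiv.subtypeSubtypeEquivSubtypeInter (fun π : Equiv.Perm (Fin (v.length+1)) => sigP v (v.length+1) π) (fun π => π.symm (Fin.last v.length) = j)).trans (Equiv.subtypeEquivRight ?_)
    intro π
    rw [Fin.ext_iff]
  rw [Nat.card_congr e1, Nat.card_eq_fintype_card, Fintype.card_sigma]
  exact Finset.sum_congr rfl (fun j _ => (Nat.card_eq_fintype_card).symm)

lemma fiber_empty (v : List Bool) (j : ℕ) (hj : j < v.length + 1)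
    (h : ¬((j = 0 ∨ v[j-1]? = some true) ∧ (j = v.length ∨ v[j]? = some false))) :
    Nat.card {π : Equiv.Perm (Fin (v.length+1)) //
      sigP v (v.length+1) π ∧ ((π.symm (Fin.last v.length) : Fin (v.length+1)) : ℕ) = j} = 0 := by
  have : IsEmpty {π : Equiv.Perm (Fin (v.length+1)) //
      sigP v (v.length+1) π ∧ ((π.symm (Fin.last v.length) : Fin (v.length+1)) : ℕ) = j} := by
    constructor
    rintro ⟨π, hP, hpos⟩
    have hπj : π ⟨j, hj⟩ = Fin.last v.length := by
      have : π.symm (Fin.last v.length) = ⟨j, hj⟩ := Fin.ext hpos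
      rw [← this]; exact π.apply_symm_apply _
    rw [not_and_or] at h
    rcases h with h | h
    · push_neg at h
      obtain ⟨h0, ht⟩ := h
      have hi : (j-1) + 1 < v.length + 1 := by omega
      have := (hP (j-1) hi).mpr ?_
      · exact ht this
      · have he : (⟨j-1+1, hi⟩ : Fin (v.length+1)) = ⟨j, hj⟩ := Fin.ext (show j-1+1 = j by omega)
        rw [he, hπj]
        have hne : π ⟨j-1, by omega⟩ ≠ Fin.last v.length := by
          rw [← hπj]
          exact fun hc => (by omega : j - 1 ≠ j) (Fin.mk.injEq .. ▸ π.injective hc)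
        exact Fin.lt_iff_val_lt_val.mpr (Fin.val_lt_last hne)
    · push_neg at h
      obtain ⟨hn, hf⟩ := h
      have hjlen : j < v.length := by omega
      have hi : j + 1 < v.length + 1 := by omega
      have := (hP j hi)
      rw [hπj] at this
      have hnt : ¬ (v[j]? = some true) := by
        rw [this]
        exact Fin.not_lt.mpr (Fin.le_last _)
      rw [List.getElem?_eq_getElem hjlen] at hnt hf
      cases hv : v[j]
      · exact hf (by rw [hv])
      · exact hnt (by rw [hv])
  exact Nat.card_of_isEmpty

section build

variable {n j : ℕ}

lemma compl_card (S : Finset (Fin n)) (hS : S.card = j) : Sᶜ.card = n - j := by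
  rw [Finset.card_compl, hS, Fintype.card_fin]

lemma emb_iso_symm {k : ℕ} (s : Finset (Fin n)) (h : s.card = k) (w : {x // x ∈ s}) :
    s.orderEmbOfFin h ((s.orderIsoOfFin h).symm w) = ↑w := by
  rw [← Finset.coe_orderIsoOfFin_apply, OrderIso.apply_symm_apply]

def fwd (S : Finset (Fin n)) (hS : S.card = j) (σ : Equiv.Perm (Fin j))
    (τ : Equiv.Perm (Fin (n - j))) : Fin (n + 1) → Fin (n + 1) := fun x =>
  if h : (x : ℕ) < j then (S.orderEmbOfFin hS (σ ⟨x, h⟩)).castSucc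
  else if h' : (x : ℕ) = j then Fin.last n
  else (Sᶜ.orderEmbOfFin (compl_card S hS) (τ ⟨(x : ℕ) - (j+1), by have := x.isLt; omega⟩)).castSucc

variable (S : Finset (Fin n)) (hS : S.card = j) (σ : Equiv.Perm (Fin j))
    (τ : Equiv.Perm (Fin (n - j)))

lemma fwd_apply_lt (x : Fin (n+1)) (h : (x : ℕ) < j) :
    fwd S hS σ τ x = (S.orderEmbOfFin hS (σ ⟨x, h⟩)).castSucc := by
  unfold fwd; rw [dif_pos h]

lemma fwd_apply_eq (x : Fin (n+1)) (h : (x : ℕ) = j) : fwd S hS σ τ x = Fin.last n := by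
  unfold fwd; rw [dif_neg (by omega), dif_pos h]

lemma fwd_apply_gt (x : Fin (n+1)) (h : j < (x : ℕ)) :
    fwd S hS σ τ x = (Sᶜ.orderEmbOfFin (compl_card S hS)
      (τ ⟨(x : ℕ) - (j+1), by have := x.isLt; omega⟩)).castSucc := by
  unfold fwd; rw [dif_neg (by omega), dif_neg (by omega)]

lemma fwd_injective : Function.Injective (fwd S hS σ τ) := by
  intro x x' hxx
  rcases lt_trichotomy (x : ℕ) j with h1 | h1 | h1 <;>
    rcases lt_trichotomy (x' : ℕ) j with h2 | h2 | h2
  · rw [fwd_apply_lt S hS σ τ x h1, fwd_apply_lt S hS σ τ x' h2] at hxx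
    have h3 := (S.orderEmbOfFin hS).injective (Fin.castSucc_injective _ hxx)
    have h4 := σ.injective h3
    have h5 := congrArg Fin.val h4
    simp only at h5
    exact Fin.ext h5
  · rw [fwd_apply_lt S hS σ τ x h1, fwd_apply_eq S hS σ τ x' h2] at hxx
    have := congrArg Fin.val hxx
    have := (S.orderEmbOfFin hS (σ ⟨x, h1⟩)).isLt
    simp only [Fin.coe_castSucc, Fin.val_last] at *
    omega
  · rw [fwd_apply_lt S hS σ τ x h1, fwd_apply_gt S hS σ τ x' h2] at hxx
    have h3 := Fin.castSucc_injective _ hxx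
    have h4 : S.orderEmbOfFin hS (σ ⟨x, h1⟩) ∈ S := Finset.orderEmbOfFin_mem _ _ _
    have h5 : S.orderEmbOfFin hS (σ ⟨x, h1⟩) ∈ Sᶜ := h3 ▸ Finset.orderEmbOfFin_mem _ _ _
    exact absurd h4 (Finset.mem_compl.mp h5)
  · rw [fwd_apply_eq S hS σ τ x h1, fwd_apply_lt S hS σ τ x' h2] at hxx
    have := congrArg Fin.val hxx
    have := (S.orderEmbOfFin hS (σ ⟨x', h2⟩)).isLt
    simp only [Fin.coe_castSucc, Fin.val_last] at *
    omega
  · exact Fin.ext (h1.trans h2.symm)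
  · rw [fwd_apply_eq S hS σ τ x h1, fwd_apply_gt S hS σ τ x' h2] at hxx
    have := congrArg Fin.val hxx
    have := (Sᶜ.orderEmbOfFin (compl_card S hS) (τ ⟨(x' : ℕ) - (j+1), by have := x'.isLt; omega⟩)).isLt
    simp only [Fin.coe_castSucc, Fin.val_last] at *
    omega
  · rw [fwd_apply_gt S hS σ τ x h1, fwd_apply_lt S hS σ τ x' h2] at hxx
    have h3 := Fin.castSucc_injective _ hxx
    have h4 : S.orderEmbOfFin hS (σ ⟨x', h2⟩) ∈ S := Finset.orderEmbOfFin_mem _ _ _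
    have h5 : S.orderEmbOfFin hS (σ ⟨x', h2⟩) ∈ Sᶜ := h3 ▸ Finset.orderEmbOfFin_mem _ _ _
    exact absurd h4 (Finset.mem_compl.mp h5)
  · rw [fwd_apply_gt S hS σ τ x h1, fwd_apply_eq S hS σ τ x' h2] at hxx
    have := congrArg Fin.val hxx
    have := (Sᶜ.orderEmbOfFin (compl_card S hS) (τ ⟨(x : ℕ) - (j+1), by have := x.isLt; omega⟩)).isLt
    simp only [Fin.coe_castSucc, Fin.val_last] at *
    omega
  · rw [fwd_apply_gt S hS σ τ x h1, fwd_apply_gt S hS σ τ x' h2] at hxx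
    have h3 := (Sᶜ.orderEmbOfFin (compl_card S hS)).injective (Fin.castSucc_injective _ hxx)
    have h4 := τ.injective h3
    have h5 := congrArg Fin.val h4
    simp only at h5
    exact Fin.ext (by omega)

noncomputable def buildPerm : Equiv.Perm (Fin (n + 1)) :=
  Equiv.ofBijective (fwd S hS σ τ) (Finite.injective_iff_bijective.mp (fwd_injective S hS σ τ))

lemma buildPerm_apply (x : Fin (n+1)) : buildPerm S hS σ τ x = fwd S hS σ τ x := rfl

lemma buildPerm_symm_last (hj : j ≤ n) :
    ((buildPerm S hS σ τ).symm (Fin.last n) : ℕ) = j := by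
  have : (buildPerm S hS σ τ).symm (Fin.last n) = ⟨j, by omega⟩ := by
    rw [Equiv.symm_apply_eq]
    exact (fwd_apply_eq S hS σ τ ⟨j, by omega⟩ rfl).symm
  rw [this]

lemma buildPerm_sigP (v : List Bool) (hn : n = v.length) (hj : j ≤ n)
    (hl : j = 0 ∨ v[j-1]? = some true) (hr : j = n ∨ v[j]? = some false)
    (hσ : sigP (v.take (j-1)) j σ) (hτ : sigP (v.drop (j+1)) (n-j) τ) :
    sigP v (n+1) (buildPerm S hS σ τ) := by
  intro i hi
  rw [buildPerm_apply, buildPerm_apply]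
  rcases lt_trichotomy (i+1) j with h | h | h
  · rw [fwd_apply_lt S hS σ τ ⟨i, by omega⟩ (show i < j by omega), fwd_apply_lt S hS σ τ ⟨i+1, hi⟩ (show i+1 < j from h),
      Fin.castSucc_lt_castSucc_iff, OrderEmbedding.lt_iff_lt]
    have := hσ i (by omega)
    rwa [List.getElem?_take_of_lt (by omega : i < j - 1)] at this
  · rw [fwd_apply_lt S hS σ τ ⟨i, by omega⟩ (show i < j by omega), fwd_apply_eq S hS σ τ ⟨i+1, hi⟩ (show i+1 = j from h)]
    have hv : v[i]? = some true := by
      rcases hl with h0 | h0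
      · omega
      · have : i = j - 1 := by omega
        rw [this]; exact h0
    exact iff_of_true hv (Fin.castSucc_lt_last _)
  · rcases lt_trichotomy i j with h' | h' | h'
    · omega
    · rw [fwd_apply_eq S hS σ τ ⟨i, by omega⟩ (show i = j from h'), fwd_apply_gt S hS σ τ ⟨i+1, hi⟩ (show j < i+1 by omega)]
      have hv : v[i]? = some false := by
        rcases hr with h0 | h0
        · omega
        · rw [h']; exact h0
      rw [hv]
      simp only [Option.some.injEq]
      constructor
      · intro hc; exact absurd hc (by simp)
      · intro hc; exact absurd hc (Fin.not_lt.mpr (Fin.le_last _))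
    · rw [fwd_apply_gt S hS σ τ ⟨i, by omega⟩ (show j < i by omega), fwd_apply_gt S hS σ τ ⟨i+1, hi⟩ (show j < i+1 by omega),
        Fin.castSucc_lt_castSucc_iff, OrderEmbedding.lt_iff_lt]
      have h2 := hτ (i - (j+1)) (by omega)
      rw [List.getElem?_drop] at h2
      have e1 : j + 1 + (i - (j+1)) = i := by omega
      rw [e1] at h2
      have e2 : (⟨(i:ℕ)+1 - (j+1), by omega⟩ : Fin (n-j)) = ⟨(i - (j+1)) + 1, by omega⟩ :=
        Fin.ext (show (i:ℕ)+1 - (j+1) = (i - (j+1)) + 1 by omega)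
      rw [e2]
      exact h2

lemma fwd_apply_rpos (k : Fin (n - j)) (hk : j + 1 + (k : ℕ) < n + 1) :
    fwd S hS σ τ ⟨j + 1 + (k : ℕ), hk⟩
      = (Sᶜ.orderEmbOfFin (compl_card S hS) (τ k)).castSucc := by
  rw [fwd_apply_gt S hS σ τ _ (show j < j + 1 + (k : ℕ) by omega)]
  apply congrArg
  apply congrArg
  apply congrArg
  apply Fin.ext
  show j + 1 + (k : ℕ) - (j + 1) = (k : ℕ)
  omega

lemma mem_iff_fwd (hj : j ≤ n) (w : Fin n) :
    w ∈ S ↔ ∃ x : Fin (n+1), (x : ℕ) < j ∧ fwd S hS σ τ x = w.castSucc := by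
  constructor
  · intro hw
    obtain ⟨i, hi⟩ : ∃ i : Fin j, S.orderEmbOfFin hS i = w := by
      have h1 : (w : Fin n) ∈ Set.range (S.orderEmbOfFin hS) := by
        rw [Finset.range_orderEmbOfFin]; exact hw
      exact h1
    refine ⟨⟨(σ.symm i : ℕ), by have := (σ.symm i).isLt; omega⟩, by
      have := (σ.symm i).isLt; exact this, ?_⟩
    rw [fwd_apply_lt S hS σ τ _ (show ((σ.symm i : ℕ)) < j from (σ.symm i).isLt)]
    have h2 : σ (⟨(σ.symm i : ℕ), (σ.symm i).isLt⟩ : Fin j) = i := by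
      have : (⟨(σ.symm i : ℕ), (σ.symm i).isLt⟩ : Fin j) = σ.symm i := Fin.ext rfl
      rw [this, Equiv.apply_symm_apply]
    rw [h2, hi]
  · rintro ⟨x, hx, hfx⟩
    rw [fwd_apply_lt S hS σ τ x hx] at hfx
    have := Fin.castSucc_injective _ hfx
    rw [← this]
    exact Finset.orderEmbOfFin_mem _ _ _

end build

set_option maxHeartbeats 2000000 in
lemma card_fiber_valid (v : List Bool) {n j : ℕ} (hn : n = v.length) (hj : j ≤ n)
    (hl : j = 0 ∨ v[j-1]? = some true) (hr : j = n ∨ v[j]? = some false) :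
    Nat.card {π : Equiv.Perm (Fin (n+1)) //
        sigP v (n+1) π ∧ ((π.symm (Fin.last n) : Fin (n+1)) : ℕ) = j}
      = n.choose j * Nat.card {σ : Equiv.Perm (Fin j) // sigP (v.take (j-1)) j σ}
        * Nat.card {τ : Equiv.Perm (Fin (n-j)) // sigP (v.drop (j+1)) (n-j) τ} := by
  classical
  set Fib := {π : Equiv.Perm (Fin (n+1)) //
        sigP v (n+1) π ∧ ((π.symm (Fin.last n) : Fin (n+1)) : ℕ) = j} with hFib
  set Tri := ({S : Finset (Fin n) // S.card = j} ×
      {σ : Equiv.Perm (Fin j) // sigP (v.take (j-1)) j σ} ×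
      {τ : Equiv.Perm (Fin (n-j)) // sigP (v.drop (j+1)) (n-j) τ}) with hTri
  have hinj : Function.Injective (fun t : Tri =>
      (⟨buildPerm t.1.1 t.1.2 t.2.1.1 t.2.2.1,
        buildPerm_sigP t.1.1 t.1.2 t.2.1.1 t.2.2.1 v hn hj hl hr t.2.1.2 t.2.2.2,
        buildPerm_symm_last t.1.1 t.1.2 t.2.1.1 t.2.2.1 hj⟩ : Fib)) := by
    rintro ⟨⟨S, hS⟩, ⟨σ, hσ⟩, ⟨τ, hτ⟩⟩ ⟨⟨S', hS'⟩, ⟨σ', hσ'⟩, ⟨τ', hτ'⟩⟩ heq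
    simp only [Subtype.mk.injEq] at heq
    have hfun : ∀ x, fwd S hS σ τ x = fwd S' hS' σ' τ' x := fun x => by
      have := congrArg (fun (e : Equiv.Perm (Fin (n+1))) => e x) heq
      exact this
    have hSS : S = S' := by
      ext w
      rw [mem_iff_fwd S hS σ τ hj w, mem_iff_fwd S' hS' σ' τ' hj w]
      exact exists_congr fun x => and_congr_right fun hx => by rw [hfun x]
    subst hSS
    have hσσ : σ = σ' := by
      apply Equiv.ext
      intro i
      have h1 := hfun ⟨(i : ℕ), by omega⟩
      rw [fwd_apply_lt S hS σ τ _ (show ((i : ℕ)) < j from i.isLt),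
        fwd_apply_lt S hS' σ' τ' _ (show ((i : ℕ)) < j from i.isLt)] at h1
      have h2 := (S.orderEmbOfFin hS).injective (Fin.castSucc_injective _ h1)
      exact h2
    have hττ : τ = τ' := by
      apply Equiv.ext
      intro k
      have hk : j + 1 + (k : ℕ) < n + 1 := by have := k.isLt; omega
      have h1 := hfun ⟨j + 1 + (k : ℕ), hk⟩
      rw [fwd_apply_rpos S hS σ τ k hk, fwd_apply_rpos S hS' σ' τ' k hk] at h1
      exact (Sᶜ.orderEmbOfFin (compl_card S hS)).injective (Fin.castSucc_injective _ h1)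
    subst hσσ; subst hττ
    rfl
  have hsurj : Function.Surjective (fun t : Tri =>
      (⟨buildPerm t.1.1 t.1.2 t.2.1.1 t.2.2.1,
        buildPerm_sigP t.1.1 t.1.2 t.2.1.1 t.2.2.1 v hn hj hl hr t.2.1.2 t.2.2.2,
        buildPerm_symm_last t.1.1 t.1.2 t.2.1.1 t.2.2.1 hj⟩ : Fib)) := by
    rintro ⟨π, hP, hpos⟩
    have hπj : π ⟨j, by omega⟩ = Fin.last n := by
      have h0 : π.symm (Fin.last n) = ⟨j, by omega⟩ := Fin.ext hpos
      rw [← h0, Equiv.apply_symm_apply]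
    have hvb : ∀ (x : Fin (n+1)), (x : ℕ) ≠ j → ((π x : Fin (n+1)) : ℕ) < n := by
      intro x hx
      apply Fin.val_lt_last
      intro hc
      exact hx (congrArg Fin.val (π.injective (hc.trans hπj.symm)))
    let S : Finset (Fin n) :=
      Finset.univ.filter (fun w : Fin n => ((π.symm w.castSucc : Fin (n+1)) : ℕ) < j)
    have hmemS : ∀ w : Fin n, w ∈ S ↔ ((π.symm w.castSucc : Fin (n+1)) : ℕ) < j := by
      intro w; simp [S]
    have hpos' : ∀ (x : Fin (n+1)) (hx : (x : ℕ) ≠ j),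
        ((⟨(π x : ℕ), hvb x hx⟩ : Fin n) ∈ S ↔ (x : ℕ) < j) := by
      intro x hx
      rw [hmemS]
      have h1 : (⟨(π x : ℕ), hvb x hx⟩ : Fin n).castSucc = π x := Fin.ext rfl
      rw [h1, Equiv.symm_apply_apply]
    let posL : Fin j → Fin (n+1) := fun i => ⟨(i : ℕ), by have := i.isLt; omega⟩
    let posR : Fin (n-j) → Fin (n+1) := fun k => ⟨j + 1 + (k : ℕ), by have := k.isLt; omega⟩
    have hLne : ∀ i : Fin j, ((posL i : Fin (n+1)) : ℕ) ≠ j := fun i => by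
      show (i : ℕ) ≠ j; have := i.isLt; omega
    have hRne : ∀ k : Fin (n-j), ((posR k : Fin (n+1)) : ℕ) ≠ j := fun k => by
      show j + 1 + (k : ℕ) ≠ j; omega
    let lval : Fin j → Fin n := fun i => ⟨(π (posL i) : ℕ), hvb _ (hLne i)⟩
    let rval : Fin (n-j) → Fin n := fun k => ⟨(π (posR k) : ℕ), hvb _ (hRne k)⟩
    have hlmem : ∀ i : Fin j, lval i ∈ S := fun i => (hpos' _ (hLne i)).mpr i.isLt
    have hrmem : ∀ k : Fin (n-j), rval k ∈ Sᶜ := fun k => Finset.mem_compl.mpr (fun hc => by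
      have h1 := (hpos' _ (hRne k)).mp hc
      have h2 : (posR k : ℕ) = j + 1 + (k : ℕ) := rfl
      omega)
    have hS : S.card = j := by
      have h1 : (Finset.univ : Finset (Fin j)).card = S.card := by
        apply Finset.card_bij (fun (i : Fin j) _ => lval i) (fun i _ => hlmem i)
        · intro a _ b _ hab
          have hv := congrArg Fin.val hab
          have h2 : π (posL a) = π (posL b) := Fin.ext hv
          have hv2 := congrArg Fin.val (π.injective h2)
          exact Fin.ext hv2
        · intro w hw
          have hxj : ((π.symm w.castSucc : Fin (n+1)) : ℕ) < j := (hmemS w).mp hw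
          refine ⟨⟨((π.symm w.castSucc : Fin (n+1)) : ℕ), hxj⟩, Finset.mem_univ _, ?_⟩
          apply Fin.ext
          show (π (posL ⟨((π.symm w.castSucc : Fin (n+1)) : ℕ), hxj⟩) : ℕ) = (w : ℕ)
          have h3 : posL ⟨((π.symm w.castSucc : Fin (n+1)) : ℕ), hxj⟩ = π.symm w.castSucc :=
            Fin.ext rfl
          rw [h3, Equiv.apply_symm_apply]
          rfl
      rw [Finset.card_univ, Fintype.card_fin] at h1
      exact h1.symm
    have hσ0inj : Function.Injective
        (fun i : Fin j => (S.orderIsoOfFin hS).symm ⟨lval i, hlmem i⟩) := by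
      intro a b hab
      have h1 := congrArg (fun z => (((S.orderIsoOfFin hS) z : {w // w ∈ S}) : Fin n)) hab
      simp only [OrderIso.apply_symm_apply] at h1
      have hv := congrArg Fin.val h1
      have h2 : π (posL a) = π (posL b) := Fin.ext hv
      have hv2 := congrArg Fin.val (π.injective h2)
      exact Fin.ext hv2
    have hτ0inj : Function.Injective
        (fun k : Fin (n-j) => (Sᶜ.orderIsoOfFin (compl_card S hS)).symm ⟨rval k, hrmem k⟩) := by
      intro a b hab
      have h1 := congrArg
        (fun z => (((Sᶜ.orderIsoOfFin (compl_card S hS)) z : {w // w ∈ Sᶜ}) : Fin n)) hab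
      simp only [OrderIso.apply_symm_apply] at h1
      have hv := congrArg Fin.val h1
      have h2 : π (posR a) = π (posR b) := Fin.ext hv
      have h3 := congrArg Fin.val (π.injective h2)
      have h4 : (posR a : ℕ) = (posR b : ℕ) := h3
      have h5 : j + 1 + (a : ℕ) = j + 1 + (b : ℕ) := h4
      exact Fin.ext (by omega)
    let σ : Equiv.Perm (Fin j) :=
      Equiv.ofBijective _ (Finite.injective_iff_bijective.mp hσ0inj)
    let τ : Equiv.Perm (Fin (n-j)) :=
      Equiv.ofBijective _ (Finite.injective_iff_bijective.mp hτ0inj)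
    have keyσ : ∀ a b : Fin j,
        ((S.orderIsoOfFin hS).symm ⟨lval a, hlmem a⟩ < (S.orderIsoOfFin hS).symm ⟨lval b, hlmem b⟩
          ↔ π (posL a) < π (posL b)) := by
      intro a b
      rw [OrderIso.lt_iff_lt, Subtype.mk_lt_mk]
      exact Iff.rfl
    have keyτ : ∀ a b : Fin (n-j),
        ((Sᶜ.orderIsoOfFin (compl_card S hS)).symm ⟨rval a, hrmem a⟩
            < (Sᶜ.orderIsoOfFin (compl_card S hS)).symm ⟨rval b, hrmem b⟩
          ↔ π (posR a) < π (posR b)) := by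
      intro a b
      rw [OrderIso.lt_iff_lt, Subtype.mk_lt_mk]
      exact Iff.rfl
    have hσP : sigP (v.take (j-1)) j σ := by
      intro i hi
      rw [List.getElem?_take_of_lt (show i < j - 1 by omega), hP i (by omega)]
      exact (keyσ ⟨i, by omega⟩ ⟨i+1, hi⟩).symm
    have hτP : sigP (v.drop (j+1)) (n-j) τ := by
      intro i hi
      rw [List.getElem?_drop, hP (j+1+i) (by omega)]
      exact (keyτ ⟨i, by omega⟩ ⟨i+1, hi⟩).symm
    refine ⟨⟨⟨S, hS⟩, ⟨σ, hσP⟩, ⟨τ, hτP⟩⟩, ?_⟩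
    apply Subtype.ext
    show buildPerm S hS σ τ = π
    apply Equiv.ext
    intro x
    show fwd S hS σ τ x = π x
    rcases lt_trichotomy (x : ℕ) j with h | h | h
    · rw [fwd_apply_lt S hS σ τ x h]
      apply Fin.ext
      simp only [Fin.coe_castSucc]
      rw [show S.orderEmbOfFin hS (σ ⟨(x : ℕ), h⟩)
          = ((⟨lval ⟨(x : ℕ), h⟩, hlmem ⟨(x : ℕ), h⟩⟩ : {w // w ∈ S}) : Fin n)
        from emb_iso_symm S hS ⟨lval ⟨(x : ℕ), h⟩, hlmem ⟨(x : ℕ), h⟩⟩]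
    · rw [fwd_apply_eq S hS σ τ x h]
      have h1 : x = (⟨j, by omega⟩ : Fin (n+1)) := Fin.ext h
      rw [h1, hπj]
    · have hk : (x : ℕ) - (j+1) < n - j := by have := x.isLt; omega
      have hx2 : x = (⟨j + 1 + ((⟨(x : ℕ) - (j+1), hk⟩ : Fin (n-j)) : ℕ), by
          have := x.isLt; omega⟩ : Fin (n+1)) :=
        Fin.ext (show (x : ℕ) = j + 1 + ((x : ℕ) - (j+1)) by omega)
      rw [hx2, fwd_apply_rpos S hS σ τ ⟨(x : ℕ) - (j+1), hk⟩ (by have := x.isLt; omega)]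
      apply Fin.ext
      simp only [Fin.coe_castSucc]
      have hτapp : τ ⟨(x : ℕ) - (j+1), hk⟩
          = (Sᶜ.orderIsoOfFin (compl_card S hS)).symm
              ⟨rval ⟨(x : ℕ) - (j+1), hk⟩, hrmem ⟨(x : ℕ) - (j+1), hk⟩⟩ := rfl
      rw [hτapp, emb_iso_symm Sᶜ (compl_card S hS)]
  have E := Equiv.ofBijective _ ⟨hinj, hsurj⟩
  rw [← Nat.card_congr E, hTri, Nat.card_prod, Nat.card_prod]
  have hchoose : Nat.card {S : Finset (Fin n) // S.card = j} = n.choose j := by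
    rw [Nat.card_eq_fintype_card, Fintype.card_finset_len, Fintype.card_fin]
  rw [hchoose]
  ring

lemma recursion_max (v : List Bool) :
    sigCount v = ∑ j ∈ Finset.range (v.length + 1),
      if (j = 0 ∨ v[j - 1]? = some true) ∧ (j = v.length ∨ v[j]? = some false) then
        (v.length).choose j * sigCount (v.take (j - 1)) * sigCount (v.drop (j + 1))
      else 0 := by
  rw [sigCount_fiber_sum v]
  apply Finset.sum_congr rfl
  intro j hjr
  rw [Finset.mem_range] at hjr
  by_cases hcond : (j = 0 ∨ v[j - 1]? = some true) ∧ (j = v.length ∨ v[j]? = some false)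
  · rw [if_pos hcond, card_fiber_valid v rfl (by omega) hcond.1 hcond.2]
    have hσ : Nat.card {σ : Equiv.Perm (Fin j) // sigP (v.take (j-1)) j σ}
        = sigCount (v.take (j-1)) := by
      by_cases h0 : j = 0
      · subst h0
        rw [show v.take (0-1) = [] from List.take_zero (l := v)]
        rw [sigCount_nil]
        exact card_sigP_zero []
      · exact card_sigP (v.take (j-1)) j (by rw [List.length_take]; omega)
    have hτ : Nat.card {τ : Equiv.Perm (Fin (v.length - j)) // sigP (v.drop (j+1)) (v.length - j) τ}
        = sigCount (v.drop (j+1)) := by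
      by_cases hn0 : j = v.length
      · have hd : v.drop (j+1) = [] := List.drop_eq_nil_of_le (by omega)
        have hz : v.length - j = 0 := by omega
        rw [hd, hz, sigCount_nil]
        exact card_sigP_zero []
      · exact card_sigP (v.drop (j+1)) (v.length - j) (by rw [List.length_drop]; omega)
    rw [hσ, hτ]
  · rw [if_neg hcond, fiber_empty v j (by omega) hcond]

lemma sigP_map_not_iff (w : List Bool) (m : ℕ) (hm : m = w.length + 1) (π : Equiv.Perm (Fin m)) :
    sigP (w.map not) m π ↔ sigP w m (π.trans (Fin.revPerm)) := by
  unfold sigP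
  apply forall_congr'
  intro i
  apply forall_congr'
  intro hi
  have hilen : i < w.length := by omega
  rw [List.getElem?_map, List.getElem?_eq_getElem hilen]
  simp only [Option.map_some, Option.some.injEq, Equiv.trans_apply, Fin.revPerm_apply,
    Fin.rev_lt_rev, Bool.not_eq_true']
  rcases lt_trichotomy (π ⟨i, by omega⟩) (π ⟨i+1, hi⟩) with h | h | h
  · simp [h, asymm h]
  · have hne : (⟨i, by omega⟩ : Fin m) ≠ ⟨i+1, hi⟩ := by
      intro hc; have := congrArg Fin.val hc; simp at this
    exact absurd (π.injective h) hne
  · simp [h, asymm h, lt_irrefl]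

lemma sigCount_map_not (u : List Bool) : sigCount (u.map not) = sigCount u := by
  rw [← card_sigP (u.map not) (u.length + 1) (by rw [List.length_map]),
    ← card_sigP u (u.length + 1) rfl]
  apply Nat.card_congr
  refine Equiv.subtypeEquiv
    (⟨fun π => π.trans Fin.revPerm, fun π => π.trans Fin.revPerm,
      fun π => by ext x; simp, fun π => by ext x; simp⟩ :
      Equiv.Perm (Fin (u.length+1)) ≃ Equiv.Perm (Fin (u.length+1))) (fun π => ?_)
  exact sigP_map_not_iff u (u.length + 1) rfl π

/-- The number of permutations with signature `u` satisfies two recursions: one summing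
over the set `T_u` of valid (0-based) positions `j` for the maximal element, and one
summing over the set `U_u` of valid positions for the minimal element. -/
theorem sigCount_recursion_max_and_min (u : List Bool) :
    (sigCount u = ∑ j ∈ Finset.range (u.length + 1),
      if (j = 0 ∨ u[j - 1]? = some true) ∧ (j = u.length ∨ u[j]? = some false) then
        (u.length).choose j * sigCount (u.take (j - 1)) * sigCount (u.drop (j + 1))
      else 0) ∧
    (sigCount u = ∑ j ∈ Finset.range (u.length + 1),
      if (j = 0 ∨ u[j - 1]? = some false) ∧ (j = u.length ∨ u[j]? = some true) then
        (u.length).choose j * sigCount (u.take (j - 1)) * sigCount (u.drop (j + 1))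
      else 0) := by
  constructor
  · exact recursion_max u
  · have h1 := recursion_max (u.map not)
    rw [sigCount_map_not u] at h1
    rw [h1]
    apply Finset.sum_congr
    · rw [List.length_map]
    · intro j hj
      rw [Finset.mem_range] at hj
      have hg : ∀ (k : ℕ) (b : Bool), ((u.map not)[k]? = some b ↔ u[k]? = some (!b)) := by
        intro k b
        rw [List.getElem?_map]
        cases h : u[k]? with
        | none => simp
        | some a => cases a <;> cases b <;> simp
      have hcond : ((j = 0 ∨ (u.map not)[j-1]? = some true)
            ∧ (j = (u.map not).length ∨ (u.map not)[j]? = some false))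
          ↔ ((j = 0 ∨ u[j - 1]? = some false) ∧ (j = u.length ∨ u[j]? = some true)) := by
        rw [List.length_map]
        constructor
        · rintro ⟨ha, hb⟩
          refine ⟨?_, ?_⟩
          · rcases ha with ha | ha
            · exact Or.inl ha
            · exact Or.inr ((hg _ true).mp ha)
          · rcases hb with hb | hb
            · exact Or.inl hb
            · exact Or.inr ((hg _ false).mp hb)
        · rintro ⟨ha, hb⟩
          refine ⟨?_, ?_⟩
          · rcases ha with ha | ha
            · exact Or.inl ha
            · exact Or.inr ((hg _ true).mpr ha)
          · rcases hb with hb | hb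
            · exact Or.inl hb
            · exact Or.inr ((hg _ false).mpr hb)
      have hterm : (u.map not).length.choose j * sigCount ((u.map not).take (j-1))
            * sigCount ((u.map not).drop (j+1))
          = u.length.choose j * sigCount (u.take (j - 1)) * sigCount (u.drop (j + 1)) := by
        rw [List.length_map, ← List.map_take, ← List.map_drop, sigCount_map_not, sigCount_map_not]
      rw [if_congr hcond hterm rfl]
end

section
/- Let $\delta_0, \delta_1 \in [0,1]$ with $\delta_0+\delta_1>0$ and let $A$ be the $4\times 4$ real matrix $A=\begin{pmatrix}-2\delta_0 & 1-\delta_0 & \delta_1 & 0\\ \delta_0 & -1 & 0 & \delta_1\\ \delta_0 & 0 & -1 & \delta_1\\ 0 & \delta_0 & 1-\delta_1 & -2\delta_1\end{pmatrix}$. Then the vector $v = \big((1-\delta_0+\delta_1)\delta_1,\ 2\delta_0\delta_1,\ 2\delta_0\delta_1,\ (1-\delta_1+\delta_0)\delta_0\big)^T$ satisfies $Av = 0$, and the entries of $\frac{1}{(1+\delta_0+\delta_1)(\delta_0+\delta_1)} v$ sum to $1$. -/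
theorem tandem_pair_frequency_stationary (δ0 δ1 : ℝ)
    (h0 : δ0 ∈ Set.Icc (0:ℝ) 1) (h1 : δ1 ∈ Set.Icc (0:ℝ) 1) (hpos : 0 < δ0 + δ1) :
    (Matrix.mulVec
      !![-2 * δ0, 1 - δ0, δ1, 0;
         δ0, -1, 0, δ1;
         δ0, 0, -1, δ1;
         0, δ0, 1 - δ1, -2 * δ1]
      ![(1 - δ0 + δ1) * δ1, 2 * δ0 * δ1, 2 * δ0 * δ1, (1 - δ1 + δ0) * δ0] = 0) ∧
    (∑ i : Fin 4,
      (1 / ((1 + δ0 + δ1) * (δ0 + δ1))) *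
        ![(1 - δ0 + δ1) * δ1, 2 * δ0 * δ1, 2 * δ0 * δ1, (1 - δ1 + δ0) * δ0] i = 1) := by
  have hne : (1 + δ0 + δ1) * (δ0 + δ1) ≠ 0 := by
    have : 0 < 1 + δ0 + δ1 := by linarith
    positivity
  constructor
  · funext i
    fin_cases i <;>
      simp [Matrix.mulVec, dotProduct, Fin.sum_univ_four] <;> ring
  · rw [Fin.sum_univ_four]
    simp only [Matrix.cons_val]
    rw [← mul_add, ← mul_add, ← mul_add, one_div, inv_mul_eq_one₀ hne]
    ring
end
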